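/- Let A and B be m×n complex matrices and E = B − A. Define α′₁ := (‖A†E‖_F² − ‖A†EB†B‖_F²)/‖A‖₂² + (‖EB†‖_F² − ‖AA†EB†‖_F²)/‖B‖₂² and α′₂ := (‖EA†‖_F² − ‖BB†EA†‖_F²)/‖A‖₂² + (‖B†E‖_F² − ‖B†EA†A‖_F²)/‖B‖₂². Then ‖B† − A†‖_F² ≥ max{α′₁ + ‖B†EA†‖_F², α′₂ + ‖A†EB†‖_F²}. -/

import Mathlib

open Matrix

/-- The square of the Frobenius norm of a complex matrix. -/
noncomputable def frobSq {α β : Type*} [Fintype α] [Fintype β] (M : Matrix α β ℂ) : ℝ :=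
  ∑ i, ∑ j, ‖M i j‖ ^ 2

/-- The spectral norm (ℓ²-operator norm) of a complex matrix. -/
noncomputable def spec {α β : Type*} [Fintype α] [Fintype β] [DecidableEq β]
    (M : Matrix α β ℂ) : ℝ :=
  ‖LinearMap.toContinuousLinearMap (Matrix.toEuclideanLin M)‖

/-- `X` is the Moore–Penrose inverse of `M` (the four Penrose equations). -/
def IsMoorePenrose {α β : Type*} [Fintype α] [Fintype β]
    (M : Matrix α β ℂ) (X : Matrix β α ℂ) : Prop :=
  M * X * M = M ∧ X * M * X = X ∧ (M * X)ᴴ = M * X ∧ (X * M)ᴴ = X * M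

variable {α β γ : Type*} [Fintype α] [Fintype β] [Fintype γ]

lemma frobSq_eq_retrace (M : Matrix α β ℂ) : frobSq M = (Matrix.trace (Mᴴ * M)).re := by
  simp only [frobSq, Matrix.trace, Matrix.diag, Matrix.mul_apply, Matrix.conjTranspose_apply,
    Complex.re_sum]
  rw [Finset.sum_comm]
  congr 1; ext j; congr 1; ext i
  rw [show star (M i j) * M i j = (Complex.normSq (M i j) : ℂ) by
    rw [mul_comm]; exact Complex.mul_conj _]
  rw [Complex.ofReal_re, ← Complex.sq_norm]

lemma frobSq_nonneg (M : Matrix α β ℂ) : 0 ≤ frobSq M :=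
  Finset.sum_nonneg fun _ _ => Finset.sum_nonneg fun _ _ => by positivity

@[simp] lemma frobSq_neg (M : Matrix α β ℂ) : frobSq (-M) = frobSq M := by
  simp [frobSq]

lemma frobSq_conjTranspose (M : Matrix α β ℂ) : frobSq Mᴴ = frobSq M := by
  simp only [frobSq, Matrix.conjTranspose_apply]
  rw [Finset.sum_comm]
  simp

lemma frobSq_add_of_orth (X Y : Matrix α β ℂ) (h : Matrix.trace (Xᴴ * Y) = 0) :
    frobSq (X + Y) = frobSq X + frobSq Y := by
  have h2 : Matrix.trace (Yᴴ * X) = 0 := by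
    have := congrArg star h
    rwa [← Matrix.trace_conjTranspose, Matrix.conjTranspose_mul, Matrix.conjTranspose_conjTranspose,
      star_zero] at this
  rw [frobSq_eq_retrace, frobSq_eq_retrace, frobSq_eq_retrace]
  simp [Matrix.conjTranspose_add, Matrix.add_mul, Matrix.mul_add, Matrix.trace_add, h, h2]

lemma frobSq_split_right (M : Matrix α β ℂ) (Q : Matrix β β ℂ)
    (hQ : Qᴴ = Q) (hQQ : Q * Q = Q) :
    frobSq M = frobSq (M * Q) + frobSq (M - M * Q) := by
  have h0 : (M - M * Q) * Q = 0 := by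
    rw [Matrix.sub_mul, Matrix.mul_assoc, hQQ, sub_self]
  have horth : Matrix.trace ((M * Q)ᴴ * (M - M * Q)) = 0 := by
    rw [Matrix.conjTranspose_mul, hQ, Matrix.mul_assoc, Matrix.trace_mul_comm,
      Matrix.mul_assoc, h0, Matrix.mul_zero, Matrix.trace_zero]
  rw [← frobSq_add_of_orth _ _ horth, add_sub_cancel]

lemma frobSq_split_left (M : Matrix α β ℂ) (P : Matrix α α ℂ)
    (hP : Pᴴ = P) (hPP : P * P = P) :
    frobSq M = frobSq (P * M) + frobSq (M - P * M) := by
  have h0 : P * (M - P * M) = 0 := by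
    rw [Matrix.mul_sub, ← Matrix.mul_assoc, hPP, sub_self]
  have horth : Matrix.trace ((P * M)ᴴ * (M - P * M)) = 0 := by
    rw [Matrix.conjTranspose_mul, hP, Matrix.mul_assoc, h0, Matrix.mul_zero, Matrix.trace_zero]
  rw [← frobSq_add_of_orth _ _ horth, add_sub_cancel]

lemma spec_nonneg [DecidableEq β] (M : Matrix α β ℂ) : 0 ≤ spec M := norm_nonneg _

lemma spec_pos [DecidableEq β] (M : Matrix α β ℂ) (h : M ≠ 0) : 0 < spec M := by
  rw [spec, norm_pos_iff]
  intro h0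
  apply h
  have h1 : Matrix.toEuclideanLin M = 0 := by
    apply LinearMap.ext
    intro v
    have := congrFun (congrArg DFunLike.coe h0) v
    simpa using this
  exact (LinearEquiv.map_eq_zero_iff _).mp h1

lemma spec_conjTranspose [DecidableEq α] [DecidableEq β] (M : Matrix α β ℂ) :
    spec Mᴴ = spec M := by
  rw [spec, spec, Matrix.toEuclideanLin_conjTranspose_eq_adjoint,
    LinearMap.adjoint_toContinuousLinearMap]
  exact LinearIsometryEquiv.norm_map ContinuousLinearMap.adjoint _

lemma frobSq_mul_le [DecidableEq β] (S : Matrix α β ℂ) (X : Matrix β γ ℂ) :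
    frobSq (S * X) ≤ spec S ^ 2 * frobSq X := by
  have col : ∀ j : γ, ∑ i, ‖(S * X) i j‖ ^ 2 ≤ spec S ^ 2 * ∑ i, ‖X i j‖ ^ 2 := by
    intro j
    set x : EuclideanSpace ℂ β := (WithLp.equiv 2 (β → ℂ)).symm (fun i => X i j) with hx
    have hnorm : ‖x‖ ^ 2 = ∑ i, ‖X i j‖ ^ 2 := by
      rw [EuclideanSpace.norm_eq, Real.sq_sqrt (by positivity)]
      rfl
    have happ : (Matrix.toEuclideanLin S) x =
        (WithLp.equiv 2 (α → ℂ)).symm (S *ᵥ fun i => X i j) := by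
      rw [Matrix.toEuclideanLin_apply]
      rfl
    have hnorm2 : ‖(Matrix.toEuclideanLin S) x‖ ^ 2 = ∑ i, ‖(S * X) i j‖ ^ 2 := by
      rw [happ, EuclideanSpace.norm_eq, Real.sq_sqrt (by positivity)]
      apply Finset.sum_congr rfl
      intro i _
      rfl
    have hle : ‖(Matrix.toEuclideanLin S) x‖ ≤ spec S * ‖x‖ := by
      have := (LinearMap.toContinuousLinearMap (Matrix.toEuclideanLin S)).le_opNorm x
      simpa [spec] using this
    calc ∑ i, ‖(S * X) i j‖ ^ 2 = ‖(Matrix.toEuclideanLin S) x‖ ^ 2 := hnorm2.symm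
      _ ≤ (spec S * ‖x‖) ^ 2 := by
          apply pow_le_pow_left₀ (norm_nonneg _) hle
      _ = spec S ^ 2 * ∑ i, ‖X i j‖ ^ 2 := by rw [mul_pow, hnorm]
  calc frobSq (S * X) = ∑ j, ∑ i, ‖(S * X) i j‖ ^ 2 := Finset.sum_comm
    _ ≤ ∑ j, spec S ^ 2 * ∑ i, ‖X i j‖ ^ 2 := Finset.sum_le_sum fun j _ => col j
    _ = spec S ^ 2 * frobSq X := by rw [← Finset.mul_sum, frobSq, Finset.sum_comm]

lemma key {m n : ℕ} (A B : Matrix (Fin m) (Fin n) ℂ)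
    (Adag Bdag : Matrix (Fin n) (Fin m) ℂ)
    (hA : IsMoorePenrose A Adag) (hB : IsMoorePenrose B Bdag)
    (E : Matrix (Fin m) (Fin n) ℂ) (hE : E = B - A)
    (hA0 : A ≠ 0) (hB0 : B ≠ 0) :
    (frobSq (Adag * E) - frobSq (Adag * E * Bdag * B)) / spec A ^ 2
      + (frobSq (E * Bdag) - frobSq (A * Adag * E * Bdag)) / spec B ^ 2
      + frobSq (Bdag * E * Adag) ≤ frobSq (Bdag - Adag) := by
  obtain ⟨hA1, hA2, hA3, hA4⟩ := hA
  obtain ⟨hB1, hB2, hB3, hB4⟩ := hB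
  set P := A * Adag with hP
  set Q := Bdag * B with hQ
  have hPh : Pᴴ = P := hA3
  have hQh : Qᴴ = Q := hB4
  have hPP : P * P = P := by rw [hP, ← Matrix.mul_assoc, hA1]
  have hQQ : Q * Q = Q := by rw [hQ, ← Matrix.mul_assoc, hB2]
  have fact1 : Adag * P = Adag := by rw [hP, ← Matrix.mul_assoc, hA2]
  have fact2 : Q * Bdag = Bdag := by rw [hQ]; exact hB2
  have fact7 : B * Q = B := by rw [hQ, ← Matrix.mul_assoc, hB1]
  have fact8 : P * A = A := by rw [hP]; exact hA1
  have hAdA : Aᴴ * Adagᴴ = Adag * A := by rw [← Matrix.conjTranspose_mul, hA4]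
  set X1 := Bdag * P - Q * Adag with hX1
  set X2 := Bdag - Bdag * P with hX2
  set X3 := Q * Adag - Adag with hX3
  -- decomposition
  have hdec : Bdag - Adag = X1 + X2 + X3 := by rw [hX1, hX2, hX3]; abel
  -- projector facts
  have hX1P : X1 * P = X1 := by
    rw [hX1, Matrix.sub_mul, Matrix.mul_assoc Bdag P P, hPP, Matrix.mul_assoc Q Adag P, fact1]
  have hX2P : X2 * P = 0 := by
    rw [hX2, Matrix.sub_mul, Matrix.mul_assoc Bdag P P, hPP, sub_self]
  have hQX1 : Q * X1 = X1 := by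
    rw [hX1, Matrix.mul_sub, ← Matrix.mul_assoc Q Bdag P, fact2, ← Matrix.mul_assoc Q Q Adag, hQQ]
  have hQX2 : Q * X2 = X2 := by
    rw [hX2, Matrix.mul_sub, fact2, ← Matrix.mul_assoc Q Bdag P, fact2]
  have hQX3 : Q * X3 = 0 := by
    rw [hX3, Matrix.mul_sub, ← Matrix.mul_assoc Q Q Adag, hQQ, sub_self]
  -- orthogonality
  have t12 : Matrix.trace (X1ᴴ * X2) = 0 := by
    conv_lhs => rw [← hX1P]
    rw [Matrix.conjTranspose_mul, hPh, Matrix.mul_assoc, Matrix.trace_mul_comm,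
      Matrix.mul_assoc, hX2P, Matrix.mul_zero, Matrix.trace_zero]
  have t13 : Matrix.trace (X1ᴴ * X3) = 0 := by
    conv_lhs => rw [← hQX1]
    rw [Matrix.conjTranspose_mul, hQh, Matrix.mul_assoc, hQX3, Matrix.mul_zero, Matrix.trace_zero]
  have t23 : Matrix.trace (X2ᴴ * X3) = 0 := by
    conv_lhs => rw [← hQX2]
    rw [Matrix.conjTranspose_mul, hQh, Matrix.mul_assoc, hQX3, Matrix.mul_zero, Matrix.trace_zero]
  have hsum : frobSq (Bdag - Adag) = frobSq X1 + frobSq X2 + frobSq X3 := by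
    rw [hdec, frobSq_add_of_orth (X1 + X2) X3
        (by rw [Matrix.conjTranspose_add, Matrix.add_mul, Matrix.trace_add, t13, t23, add_zero]),
      frobSq_add_of_orth X1 X2 t12]
  -- X1 term
  have dX1 : Bdag * E * Adag = Q * Adag - Bdag * P := by
    rw [hE, Matrix.mul_sub, Matrix.sub_mul, ← hQ, Matrix.mul_assoc Bdag A Adag, ← hP]
  have fX1 : frobSq (Bdag * E * Adag) = frobSq X1 := by
    rw [dX1, show Q * Adag - Bdag * P = -X1 from by rw [hX1, neg_sub], frobSq_neg]
  -- A-side numerator and bound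
  have numA : frobSq (Adag * E) - frobSq (Adag * E * Bdag * B)
      = frobSq (Adag * E - Adag * E * Q) := by
    have ha : Adag * E * Bdag * B = Adag * E * Q := by
      rw [Matrix.mul_assoc (Adag * E) Bdag B, hQ]
    have h := frobSq_split_right (Adag * E) Q hQh hQQ
    rw [ha]
    linarith [h]
  have lfact7 : Adag * B * Q = Adag * B := by rw [Matrix.mul_assoc, fact7]
  have claimA0 : Adag * E - Adag * E * Q = Adag * A * Q - Adag * A := by
    rw [hE]
    simp only [Matrix.mul_sub, Matrix.sub_mul, ← Matrix.mul_assoc, lfact7]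
    abel
  have claimA1 : Aᴴ * X3ᴴ = Adag * A * Q - Adag * A := by
    rw [hX3, Matrix.conjTranspose_sub, Matrix.conjTranspose_mul, hQh, Matrix.mul_sub,
      ← Matrix.mul_assoc, hAdA]
  have boundA : frobSq (Adag * E - Adag * E * Q) ≤ spec A ^ 2 * frobSq X3 := by
    rw [claimA0, ← claimA1]
    calc frobSq (Aᴴ * X3ᴴ) ≤ spec Aᴴ ^ 2 * frobSq X3ᴴ := frobSq_mul_le _ _
      _ = spec A ^ 2 * frobSq X3 := by rw [spec_conjTranspose, frobSq_conjTranspose]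
  -- B-side numerator and bound
  have numB : frobSq (E * Bdag) - frobSq (P * E * Bdag)
      = frobSq (E * Bdag - P * (E * Bdag)) := by
    have hb : P * E * Bdag = P * (E * Bdag) := by rw [Matrix.mul_assoc]
    have h := frobSq_split_left (E * Bdag) P hPh hPP
    rw [hb]
    linarith [h]
  have lfact8 : P * A * Bdag = A * Bdag := by rw [fact8]
  have claimB0 : E * Bdag - P * (E * Bdag) = B * Bdag - P * (B * Bdag) := by
    rw [hE]
    simp only [Matrix.mul_sub, Matrix.sub_mul, ← Matrix.mul_assoc, lfact8]
    abel
  have claimB1 : (B * X2)ᴴ = B * Bdag - P * (B * Bdag) := by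
    rw [hX2, Matrix.mul_sub, Matrix.conjTranspose_sub, hB3,
      Matrix.conjTranspose_mul B (Bdag * P), Matrix.conjTranspose_mul Bdag P, hPh,
      Matrix.mul_assoc P Bdagᴴ Bᴴ, ← Matrix.conjTranspose_mul B Bdag, hB3]
  have boundB : frobSq (E * Bdag - P * (E * Bdag)) ≤ spec B ^ 2 * frobSq X2 := by
    rw [claimB0, ← claimB1, frobSq_conjTranspose]
    exact frobSq_mul_le B X2
  -- assemble
  have h3 : (frobSq (Adag * E) - frobSq (Adag * E * Bdag * B)) / spec A ^ 2 ≤ frobSq X3 := by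
    rw [numA, div_le_iff₀ (pow_pos (spec_pos A hA0) 2), mul_comm]
    exact boundA
  have h2 : (frobSq (E * Bdag) - frobSq (P * E * Bdag)) / spec B ^ 2 ≤ frobSq X2 := by
    rw [numB, div_le_iff₀ (pow_pos (spec_pos B hB0) 2), mul_comm]
    exact boundB
  rw [hsum, fX1]
  linarith [h3, h2]


theorem stmt7 {m n : ℕ}
    (A B : Matrix (Fin m) (Fin n) ℂ)
    (Adag Bdag : Matrix (Fin n) (Fin m) ℂ)
    (hA : IsMoorePenrose A Adag) (hB : IsMoorePenrose B Bdag)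
    (E : Matrix (Fin m) (Fin n) ℂ) (hE : E = B - A)
    (hA0 : A ≠ 0) (hB0 : B ≠ 0)
    :
    frobSq (Bdag - Adag) ≥
      max
        ((frobSq (Adag * E) - frobSq (Adag * E * Bdag * B)) / spec A ^ 2
          + (frobSq (E * Bdag) - frobSq (A * Adag * E * Bdag)) / spec B ^ 2
          + frobSq (Bdag * E * Adag))
        ((frobSq (E * Adag) - frobSq (B * Bdag * E * Adag)) / spec A ^ 2
          + (frobSq (Bdag * E) - frobSq (Bdag * E * Adag * A)) / spec B ^ 2
          + frobSq (Adag * E * Bdag)) := by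
  rw [ge_iff_le, max_le_iff]
  constructor
  · exact key A B Adag Bdag hA hB E hE hA0 hB0
  · have h := key B A Bdag Adag hB hA (A - B) rfl hB0 hA0
    have hAB : A - B = -E := by rw [hE, neg_sub]
    rw [hAB] at h
    simp only [Matrix.mul_neg, Matrix.neg_mul, frobSq_neg] at h
    have hfr : frobSq (Adag - Bdag) = frobSq (Bdag - Adag) := by
      rw [show Adag - Bdag = -(Bdag - Adag) from (neg_sub _ _).symm, frobSq_neg]
    rw [hfr] at h
    linarith [h]
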